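/- Let j : ℕ × ℕ → ℕ be a bijection with j(a,b) ≥ max(a,b) for all a, b ∈ ℕ, and let h : ℕ × ℕ × ℕ → ℂ satisfy: h(a,b,c) ≠ 0 if and only if a = j(b,c) or b = j(a,c) or c = j(a,b). Then every finitely supported function ℕ → ℂ lies in the linear span of the row vectors v_{a,b,·} = (h(a,b,c))_{c∈ℕ}, (a,b) ∈ ℕ × ℕ; consequently (each row being finitely supported, hence in ℓ²(ℕ)) the closed linear span of {v_{a,b,·} : (a,b) ∈ ℕ × ℕ} is all of ℓ²(ℕ). -/

import Mathlib

-- auxiliary: a function with support in a finset is the sum of scaled Pi.singles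
lemma finsupp_sum_single (g : ℕ → ℂ) (s : Finset ℕ) (hs : Function.support g ⊆ s) :
    g = ∑ c ∈ s, g c • (Pi.single c (1 : ℂ) : ℕ → ℂ) := by
  funext x
  rw [Finset.sum_apply]
  have : ∀ c ∈ s, (g c • (Pi.single c (1 : ℂ) : ℕ → ℂ)) x = if x = c then g x else 0 := by
    intro c _
    by_cases hxc : x = c <;> simp [Pi.single_apply, hxc]
  rw [Finset.sum_congr rfl this, Finset.sum_ite_eq]
  by_cases hx : x ∈ s
  · simp [hx]
  · simp [hx]
    by_contra hg
    exact hx (hs hg)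


/-- if `j : ℕ × ℕ → ℕ` is a bijection with `j (a, b) ≥ max a b`, and
`h : ℕ × ℕ × ℕ → ℂ` is nonzero at `(a, b, c)` exactly when `a = j (b, c)`, `b = j (a, c)` or
`c = j (a, b)`, then every finitely supported function `ℕ → ℂ` lies in the linear span of the
row vectors `(h (a, b, ·))`; consequently the set of `ℓ²`-sequences lying in the (algebraic)
span of the rows is dense in `ℓ²(ℕ)`, i.e. the closed linear span of the rows is all of
`ℓ²(ℕ)`. -/
theorem rows_span_dense (j : ℕ × ℕ → ℕ) (hbij : Function.Bijective j)
    (hmax : ∀ a b : ℕ, max a b ≤ j (a, b))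
    (h : ℕ × ℕ × ℕ → ℂ)
    (hh : ∀ a b c : ℕ, h (a, b, c) ≠ 0 ↔ (a = j (b, c) ∨ b = j (a, c) ∨ c = j (a, b))) :
    (∀ f : ℕ → ℂ, (Function.support f).Finite →
      f ∈ Submodule.span ℂ (Set.range fun ab : ℕ × ℕ => fun c : ℕ => h (ab.1, ab.2, c))) ∧
    Dense {x : lp (fun _ : ℕ => ℂ) 2 |
      ⇑x ∈ Submodule.span ℂ (Set.range fun ab : ℕ × ℕ => fun c : ℕ => h (ab.1, ab.2, c))} := by
  set S := Submodule.span ℂ (Set.range fun ab : ℕ × ℕ => fun c : ℕ => h (ab.1, ab.2, c)) with hS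
  -- Step 1: each Pi.single n 1 lies in S
  have key : ∀ n : ℕ, (Pi.single n (1 : ℂ) : ℕ → ℂ) ∈ S := by
    intro n
    induction n using Nat.strong_induction_on with
    | _ n ih =>
    obtain ⟨⟨a, b⟩, hab⟩ := hbij.2 n
    have hrow : (fun c => h (a, b, c)) ∈ S :=
      Submodule.subset_span ⟨(a, b), rfl⟩
    have hbound : ∀ c : ℕ, h (a, b, c) ≠ 0 → c ≤ n := by
      intro c hc
      rcases (hh a b c).1 hc with h1 | h2 | h3
      · calc c ≤ max b c := le_max_right _ _
          _ ≤ j (b, c) := hmax b c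
          _ = a := h1.symm
          _ ≤ max a b := le_max_left _ _
          _ ≤ j (a, b) := hmax a b
          _ = n := hab
      · calc c ≤ max a c := le_max_right _ _
          _ ≤ j (a, c) := hmax a c
          _ = b := h2.symm
          _ ≤ max a b := le_max_right _ _
          _ ≤ j (a, b) := hmax a b
          _ = n := hab
      · rw [h3, hab]
    have hsupp : Function.support (fun c => h (a, b, c)) ⊆ Finset.range (n + 1) := by
      intro c hc
      simp only [Finset.coe_range, Set.mem_Iio]
      exact Nat.lt_succ_of_le (hbound c hc)
    have hdecomp := finsupp_sum_single (fun c => h (a, b, c)) (Finset.range (n + 1)) hsupp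
    rw [Finset.sum_range_succ] at hdecomp
    have hn0 : h (a, b, n) ≠ 0 := (hh a b n).2 (Or.inr (Or.inr hab.symm))
    have htail : (∑ c ∈ Finset.range n, h (a, b, c) • (Pi.single c (1 : ℂ) : ℕ → ℂ)) ∈ S :=
      Submodule.sum_mem _ fun c hc =>
        Submodule.smul_mem _ _ (ih c (Finset.mem_range.1 hc))
    have hsm : h (a, b, n) • (Pi.single n (1 : ℂ) : ℕ → ℂ)
        = (fun c => h (a, b, c)) - ∑ c ∈ Finset.range n, h (a, b, c) • (Pi.single c (1 : ℂ) : ℕ → ℂ) := by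
      rw [hdecomp]; abel
    have : h (a, b, n) • (Pi.single n (1 : ℂ) : ℕ → ℂ) ∈ S := by
      rw [hsm]; exact Submodule.sub_mem _ hrow htail
    have := Submodule.smul_mem S (h (a, b, n))⁻¹ this
    rwa [smul_smul, inv_mul_cancel₀ hn0, one_smul] at this
  have part1 : ∀ f : ℕ → ℂ, (Function.support f).Finite → f ∈ S := by
    intro f hf
    rw [finsupp_sum_single f hf.toFinset (fun x hx => hf.mem_toFinset.2 hx)]
    exact Submodule.sum_mem _ fun c _ => Submodule.smul_mem _ _ (key c)
  refine ⟨part1, ?_⟩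
  -- Step 2: density
  rw [dense_iff_closure_eq, Set.eq_univ_iff_forall]
  intro f
  have hsum : HasSum (fun i : ℕ => lp.single 2 i (f i)) f :=
    lp.hasSum_single ENNReal.ofNat_ne_top f
  refine mem_closure_of_tendsto hsum (Filter.Eventually.of_forall fun s => ?_)
  have : ⇑(∑ i ∈ s, lp.single 2 i (f i)) = ∑ i ∈ s, ⇑(lp.single 2 i (f i)) := by
    simp
    rfl
  refine part1 _ ?_
  rw [this]
  apply Set.Finite.subset (s.finite_toSet)
  intro x hx
  simp only [Function.mem_support, Finset.sum_apply] at hx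
  by_contra hxs
  apply hx
  refine Finset.sum_eq_zero fun i hi => ?_
  rw [lp.single_apply]
  have : x ≠ i := fun e => hxs (e ▸ hi)
  simp [this]
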